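/- arXiv:2512.07260 — 2 statements merged into one kernel-verified Lean document; each statement's English description precedes it below -/
import Mathlib

section
/- Let n ≥ 1, s ∈ (0,1), κ > 0, c' > 0. Suppose u : ℝⁿ → ℝ satisfies |u(y)| ≤ c' |y|^{-κ} for all |y| ≥ R' with R' > 1. Then for |x| > 2R', ∫_{A₃⁺} |u(x)-u(y)| / |x-y|^{n+2s} dy ≤ C |x|^{-κ-2s}, where A₃⁺ = {y : |y| ≥ |x|/2, |x-y| ≥ |x|/2, |x-y| ≥ |y|} and C depends only on n, s, κ, c'. -/
open MeasureTheory Metric Set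

section aux

variable (n : ℕ)

local notation "E" => EuclideanSpace ℝ (Fin n)

lemma tail_integrable (hn : 1 ≤ n) {p : ℝ} (hp : (n : ℝ) < p) {R : ℝ} (hR : 0 < R) :
    IntegrableOn (fun y : E => ‖y‖ ^ (-p)) {y : E | R ≤ ‖y‖} := by
  have hmeas : MeasurableSet {y : E | R ≤ ‖y‖} :=
    (isClosed_le continuous_const continuous_norm).measurableSet
  have hpn : (Module.finrank ℝ E : ℝ) < p := by
    rwa [finrank_euclideanSpace_fin]
  have hint : Integrable (fun y : E => (1 + 1 / R) ^ p * (1 + ‖y‖) ^ (-p)) :=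
    (integrable_one_add_norm hpn).const_mul _
  refine (hint.restrict (s := {y : E | R ≤ ‖y‖})).mono'
    (measurable_norm.pow_const _).aestronglyMeasurable ?_
  rw [ae_restrict_iff' hmeas]
  filter_upwards with y hy
  have hy0 : (0:ℝ) < ‖y‖ := lt_of_lt_of_le hR hy
  have h1 : (1:ℝ) + ‖y‖ ≤ (1 + 1 / R) * ‖y‖ := by
    have h' : (1:ℝ) ≤ 1 / R * ‖y‖ := by
      rw [one_div, inv_mul_eq_div]; exact (one_le_div hR).2 hy
    have he : (1 + 1/R) * ‖y‖ = ‖y‖ + 1/R * ‖y‖ := by ring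
    linarith [h']
  have e : (1 + 1/R:ℝ) ^ (-p) * (1 + 1/R) ^ p = 1 := by
    rw [← Real.rpow_add (by positivity), neg_add_cancel, Real.rpow_zero]
  have h2 : ((1 + 1/R) * ‖y‖) ^ (-p) * (1 + 1/R) ^ p = ‖y‖ ^ (-p) := by
    rw [Real.mul_rpow (by positivity) hy0.le, mul_right_comm, e, one_mul]
  calc ‖(fun y : E => ‖y‖ ^ (-p)) y‖ = ‖y‖ ^ (-p) := by
        rw [Real.norm_eq_abs, abs_of_nonneg (Real.rpow_nonneg (norm_nonneg y) _)]
    _ = ((1 + 1/R) * ‖y‖) ^ (-p) * (1 + 1/R) ^ p := h2.symm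
    _ ≤ (1 + ‖y‖) ^ (-p) * (1 + 1/R) ^ p := by
        have hp0 : (0:ℝ) < p := lt_of_le_of_lt (Nat.cast_nonneg n) hp
        exact mul_le_mul_of_nonneg_right
          (Real.rpow_le_rpow_of_nonpos (by positivity) h1 (by linarith)) (by positivity)
    _ = (1 + 1/R) ^ p * (1 + ‖y‖) ^ (-p) := mul_comm _ _

lemma tail_integral (hn : 1 ≤ n) {p : ℝ} (hp : (n : ℝ) < p) {R : ℝ} (hR : 0 < R) :
    ∫ y in {y : E | R ≤ ‖y‖}, ‖y‖ ^ (-p)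
      = (n * (volume (ball (0:E) 1)).toReal) * (R ^ ((n:ℝ) - p) / (p - n)) := by
  haveI : Nontrivial E := Module.nontrivial_of_finrank_pos (R := ℝ)
    (by rw [finrank_euclideanSpace_fin]; exact hn)
  have hmeas : MeasurableSet {y : E | R ≤ ‖y‖} :=
    (isClosed_le continuous_const continuous_norm).measurableSet
  set f : ℝ → ℝ := Set.indicator (Ici R) (fun t => t ^ (-p)) with hf
  have hdim : Module.finrank ℝ E = n := finrank_euclideanSpace_fin
  have key := MeasureTheory.integral_fun_norm_addHaar (volume : Measure E) f
  rw [hdim] at key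
  have hL : (∫ x : E, f ‖x‖) = ∫ y in {y : E | R ≤ ‖y‖}, ‖y‖ ^ (-p) := by
    have he : (fun y : E => f ‖y‖) = Set.indicator {y : E | R ≤ ‖y‖} (fun y => ‖y‖ ^ (-p)) := by
      ext y
      by_cases h : R ≤ ‖y‖ <;> simp [hf, Set.indicator_apply, h]
    rw [← integral_indicator hmeas, ← he]
  rw [hL] at key
  have hRI : (∫ y in Ioi (0:ℝ), y ^ (n - 1) • f y) = R ^ ((n:ℝ) - p) / (p - n) := by
    have h1 : (∫ y in Ioi (0:ℝ), y ^ (n - 1) • f y)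
        = ∫ y in Ici R, y ^ ((n:ℝ) - 1 - p) := by
      rw [← integral_indicator measurableSet_Ioi, ← integral_indicator measurableSet_Ici]
      congr 1
      ext y
      by_cases hyR : R ≤ y
      · have hy0 : (0:ℝ) < y := lt_of_lt_of_le hR hyR
        simp only [Set.indicator_apply, Set.mem_Ioi, hy0, if_true, hf, Set.mem_Ici, hyR,
          smul_eq_mul]
        rw [← Real.rpow_natCast y (n - 1), ← Real.rpow_add hy0]
        congr 1
        have hc : ((n - 1 : ℕ) : ℝ) = (n:ℝ) - 1 := by
          have := Nat.cast_sub hn (R := ℝ); simpa using this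
        rw [hc]; ring
      · by_cases hy : y ∈ Ioi (0:ℝ)
        · simp [Set.indicator_apply, hy, hf, Set.mem_Ici, hyR]
        · simp [Set.indicator_apply, hy, Set.mem_Ici, hyR]
    rw [h1, MeasureTheory.integral_Ici_eq_integral_Ioi,
      integral_Ioi_rpow_of_lt (by linarith) hR,
      show (n:ℝ) - 1 - p + 1 = (n:ℝ) - p by ring, neg_div, ← div_neg]
    congr 1
    ring
  rw [key, hRI]
  simp [nsmul_eq_mul, smul_eq_mul, mul_assoc, Measure.real]

end aux

lemma half_rpow {a : ℝ} (ha : 0 ≤ a) (κ : ℝ) : (a/2) ^ (-κ) = 2 ^ κ * a ^ (-κ) := by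
  rw [Real.div_rpow ha (by norm_num), Real.rpow_neg (by norm_num : (0:ℝ) ≤ 2),
    div_eq_mul_inv, inv_inv, mul_comm]

/-- Far-field estimate on the region `A₃⁺` in the decay lemma for the
fractional Laplacian. -/
theorem far_field_estimate (n : ℕ) (hn : 1 ≤ n) (s κ c' R' : ℝ)
    (hs : 0 < s) (hs1 : s < 1) (hκ : 0 < κ) (hc' : 0 < c') (hR' : 1 < R') :
    ∃ C > 0, ∀ u : EuclideanSpace ℝ (Fin n) → ℝ,
      (∀ y : EuclideanSpace ℝ (Fin n), ‖y‖ ≥ R' → |u y| ≤ c' * ‖y‖ ^ (-κ)) →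
      ∀ x : EuclideanSpace ℝ (Fin n), ‖x‖ > 2 * R' →
        (∫ y in {y : EuclideanSpace ℝ (Fin n) |
              ‖y‖ ≥ ‖x‖ / 2 ∧ ‖x - y‖ ≥ ‖x‖ / 2 ∧ ‖x - y‖ ≥ ‖y‖},
            |u x - u y| / ‖x - y‖ ^ ((n : ℝ) + 2 * s))
          ≤ C * ‖x‖ ^ (-κ - 2 * s) := by
  set E := EuclideanSpace ℝ (Fin n)
  set p : ℝ := (n : ℝ) + 2 * s with hp
  have hpn : (n : ℝ) < p := by simp [hp]; linarith
  set Cn : ℝ := n * (volume (ball (0:E) 1)).toReal with hCn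
  have hCnpos : 0 < Cn := by
    apply mul_pos
    · exact_mod_cast Nat.lt_of_lt_of_le Nat.zero_lt_one hn
    · exact ENNReal.toReal_pos (measure_ball_pos volume _ one_pos).ne'
        (measure_ball_lt_top).ne
  refine ⟨c' * (1 + 2 ^ κ) * (Cn * (2 ^ (2*s) / (2*s))), by positivity, ?_⟩
  intro u hu x hx
  set A : Set E := {y : E | ‖y‖ ≥ ‖x‖ / 2 ∧ ‖x - y‖ ≥ ‖x‖ / 2 ∧ ‖x - y‖ ≥ ‖y‖} with hA
  set S : Set E := {y : E | ‖x‖/2 ≤ ‖y‖} with hS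
  have hAS : A ⊆ S := fun y hy => hy.1
  have hx0 : (0:ℝ) < ‖x‖ := by linarith
  have hR2 : (0:ℝ) < ‖x‖/2 := by linarith
  have hmeasA : MeasurableSet A := by
    apply MeasurableSet.inter
    · exact (isClosed_le continuous_const continuous_norm).measurableSet
    apply MeasurableSet.inter
    · exact (isClosed_le continuous_const (continuous_norm.comp (by fun_prop))).measurableSet
    · exact (isClosed_le continuous_norm (continuous_norm.comp (by fun_prop))).measurableSet
  set M : ℝ := c' * (1 + 2 ^ κ) * ‖x‖ ^ (-κ) with hM
  have hMpos : 0 < M := by positivity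
  -- pointwise bound on A
  have hbound : ∀ y ∈ A, |u x - u y| / ‖x - y‖ ^ p ≤ M * ‖y‖ ^ (-p) := by
    intro y hy
    obtain ⟨h1, h2, h3⟩ := hy
    have hy0 : (0:ℝ) < ‖y‖ := lt_of_lt_of_le hR2 h1
    have hux : |u x| ≤ c' * ‖x‖ ^ (-κ) := hu x (by linarith)
    have huy : |u y| ≤ c' * (2:ℝ) ^ κ * ‖x‖ ^ (-κ) := by
      have h1' : |u y| ≤ c' * ‖y‖ ^ (-κ) := hu y (by linarith)
      refine h1'.trans ?_
      have : ‖y‖ ^ (-κ) ≤ (‖x‖/2) ^ (-κ) :=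
        Real.rpow_le_rpow_of_nonpos hR2 h1 (by linarith)
      calc c' * ‖y‖ ^ (-κ) ≤ c' * (‖x‖/2) ^ (-κ) := by gcongr
        _ = c' * (2:ℝ) ^ κ * ‖x‖ ^ (-κ) := by
            rw [half_rpow (norm_nonneg x) κ]; ring
    have hnum : |u x - u y| ≤ M := by
      calc |u x - u y| ≤ |u x| + |u y| := abs_sub _ _
        _ ≤ c' * ‖x‖ ^ (-κ) + c' * (2:ℝ) ^ κ * ‖x‖ ^ (-κ) := by linarith
        _ = M := by rw [hM]; ring
    have hden : ‖y‖ ^ p ≤ ‖x - y‖ ^ p :=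
      Real.rpow_le_rpow hy0.le h3 (by positivity)
    have hdy : (0:ℝ) < ‖y‖ ^ p := Real.rpow_pos_of_pos hy0 p
    calc |u x - u y| / ‖x - y‖ ^ p ≤ M / ‖y‖ ^ p := by
          apply div_le_div₀ (le_of_lt hMpos) hnum hdy hden
      _ = M * ‖y‖ ^ (-p) := by
          rw [Real.rpow_neg hy0.le, div_eq_mul_inv]
    done
  have hintS : IntegrableOn (fun y : E => ‖y‖ ^ (-p)) S := tail_integrable n hn hpn hR2
  have hintS' : IntegrableOn (fun y : E => M * ‖y‖ ^ (-p)) S := hintS.const_mul M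
  have hintA' : IntegrableOn (fun y : E => M * ‖y‖ ^ (-p)) A := hintS'.mono_set hAS
  have tail_val : (∫ y in S, ‖y‖ ^ (-p))
      = Cn * ((‖x‖/2) ^ ((n:ℝ) - p) / (p - n)) := tail_integral n hn hpn hR2
  have hfinal : M * ∫ y in S, ‖y‖ ^ (-p)
      ≤ c' * (1 + 2 ^ κ) * (Cn * (2 ^ (2*s) / (2*s))) * ‖x‖ ^ (-κ - 2 * s) := by
    rw [tail_val]
    have hnp : (n:ℝ) - p = -(2*s) := by rw [hp]; ring
    have hpn' : p - (n:ℝ) = 2*s := by rw [hp]; ring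
    rw [hnp, hpn']
    have hdiv : (‖x‖/2) ^ (-(2*s)) = 2 ^ (2*s) * ‖x‖ ^ (-(2*s)) :=
      half_rpow (norm_nonneg x) (2*s)
    rw [hdiv, hM]
    have hsplit : ‖x‖ ^ (-κ - 2*s) = ‖x‖ ^ (-κ) * ‖x‖ ^ (-(2*s)) := by
      rw [← Real.rpow_add hx0]; ring_nf
    rw [hsplit]
    ring_nf
    exact le_refl _
  by_cases hI : IntegrableOn (fun y : E => |u x - u y| / ‖x - y‖ ^ p) A
  · calc (∫ y in A, |u x - u y| / ‖x - y‖ ^ p)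
        ≤ ∫ y in A, M * ‖y‖ ^ (-p) :=
          setIntegral_mono_on hI hintA' hmeasA hbound
      _ ≤ ∫ y in S, M * ‖y‖ ^ (-p) := by
          apply setIntegral_mono_set hintS'
          · filter_upwards with y
            positivity
          · exact HasSubset.Subset.eventuallyLE hAS
      _ = M * ∫ y in S, ‖y‖ ^ (-p) := by rw [MeasureTheory.integral_const_mul]
      _ ≤ _ := hfinal
  · rw [integral_undef hI]
    positivity
end

section
/- Let v ∈ C²(ℝⁿ) be a function with D²v(x) positive definite for all x, satisfying det(D²v) = F in ℝⁿ with F > 0. Fix e ∈ ℝⁿ \ {0} and s ∈ (0,1), and set Δₑˢv(x) = (v(x+e) + v(x-e) - 2v(x))/|e|^{2s}. Then for all x ∈ ℝⁿ: Σ_{i,j} cof_{ij}(D²v(x)) ∂_{ij}(Δₑˢv)(x) ≥ n (det D²v(x))^{(n-1)/n} · (F(x+e)^{1/n} + F(x-e)^{1/n} - 2F(x)^{1/n}) / |e|^{2s}. -/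
open Matrix

section Aux

lemma trace_eq_sum_eigenvalues' {m : ℕ} {C : Matrix (Fin m) (Fin m) ℝ} (hC : C.IsHermitian) :
    C.trace = ∑ i, hC.eigenvalues i := by
  simpa using hC.trace_eq_sum_eigenvalues

lemma posSemidef_eigenvalues_pos' {m : ℕ} {C : Matrix (Fin m) (Fin m) ℝ} (hC : C.PosSemidef)
    (hdet : 0 < C.det) (i : Fin m) : 0 < hC.1.eigenvalues i := by
  rcases lt_or_eq_of_le (hC.eigenvalues_nonneg i) with h | h
  · exact h
  · exfalso
    have : C.det = 0 := by
      rw [hC.1.det_eq_prod_eigenvalues]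
      exact Finset.prod_eq_zero (Finset.mem_univ i) (by simp [← h])
    simp [this] at hdet

/-- trace of a posdef matrix is at least `n (det)^{1/n}` -/
lemma trace_ge_det_rpow {m : ℕ} (hm : 1 ≤ m) {C : Matrix (Fin m) (Fin m) ℝ} (hC : C.PosSemidef)
    (hdet : 0 < C.det) : (m : ℝ) * C.det ^ ((1:ℝ)/m) ≤ C.trace := by
  have hev := posSemidef_eigenvalues_pos' hC hdet
  have hm0 : (m : ℝ) ≠ 0 := by positivity
  have amgm := Real.geom_mean_le_arith_mean_weighted Finset.univ (fun _ => 1/(m:ℝ))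
    (fun i => hC.1.eigenvalues i) (fun i _ => by positivity)
    (by simp [Finset.sum_const]; field_simp) (fun i _ => (hev i).le)
  have hprod : ∏ i, (hC.1.eigenvalues i) ^ ((1:ℝ)/m) = C.det ^ ((1:ℝ)/m) := by
    rw [Real.finset_prod_rpow _ _ (fun i _ => (hev i).le)]
    congr 1
    rw [hC.1.det_eq_prod_eigenvalues]
    norm_num
  rw [hprod] at amgm
  rw [trace_eq_sum_eigenvalues' hC.1]
  calc (m : ℝ) * C.det ^ ((1:ℝ)/m) ≤ (m:ℝ) * ∑ i, (1/(m:ℝ)) * hC.1.eigenvalues i := by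
        exact mul_le_mul_of_nonneg_left amgm (by positivity)
    _ = ∑ i, hC.1.eigenvalues i := by
        rw [Finset.mul_sum]
        congr 1; funext i
        field_simp
open Matrix

open scoped MatrixOrder in
lemma trace_adjugate_mul_ge {n : ℕ} (hn : 1 ≤ n) {A B : Matrix (Fin n) (Fin n) ℝ}
    (hA : A.PosDef) (hB : B.PosDef) :
    (n : ℝ) * A.det ^ (((n:ℝ)-1)/n) * B.det ^ ((1:ℝ)/n) ≤ (A.adjugate * B).trace := by
  have hAdet : 0 < A.det := hA.det_pos
  have hBdet : 0 < B.det := hB.det_pos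
  set S := CFC.sqrt A with hSdef
  have hS : S.PosSemidef := (CFC.sqrt_nonneg A).posSemidef
  have hSS : S * S = A := CFC.sqrt_mul_sqrt_self A hA.posSemidef.nonneg
  have hdetS : S.det * S.det = A.det := by rw [← Matrix.det_mul, hSS]
  have hdetS0 : S.det ≠ 0 := by
    intro h; rw [h, zero_mul] at hdetS; exact hAdet.ne' hdetS.symm
  have hSinvH : (S⁻¹).IsHermitian := hS.1.inv
  -- the congruence matrix
  set C : Matrix (Fin n) (Fin n) ℝ := S⁻¹ * B * S⁻¹ with hCdef
  have hCps : C.PosSemidef := by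
    have := hB.posSemidef.conjTranspose_mul_mul_same S⁻¹
    rwa [hSinvH.eq] at this
  have hdetC : C.det = B.det / A.det := by
    rw [hCdef, Matrix.det_mul, Matrix.det_mul, Matrix.det_nonsing_inv]
    rw [← hdetS]
    field_simp
    rw [Ring.inverse_eq_inv', ← mul_pow, inv_mul_cancel₀ hdetS0, one_pow]
  have hdetCpos : 0 < C.det := by rw [hdetC]; positivity
  -- trace identity
  have hAinv : A⁻¹ = S⁻¹ * S⁻¹ := by rw [← hSS, Matrix.mul_inv_rev]
  have hadj : A.adjugate = A.det • A⁻¹ := by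
    rw [Matrix.inv_def, smul_smul, Ring.inverse_eq_inv', mul_inv_cancel₀ hAdet.ne', one_smul]
  have htr : (A.adjugate * B).trace = A.det * C.trace := by
    rw [hadj, Matrix.smul_mul, Matrix.trace_smul, smul_eq_mul, hAinv, hCdef]
    congr 1
    rw [Matrix.mul_assoc, Matrix.trace_mul_comm, Matrix.mul_assoc]
  rw [htr]
  have key := trace_ge_det_rpow hn hCps hdetCpos
  calc (n : ℝ) * A.det ^ (((n:ℝ)-1)/n) * B.det ^ ((1:ℝ)/n)
      = A.det * ((n:ℝ) * C.det ^ ((1:ℝ)/n)) := by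
        have hn0 : (n:ℝ) ≠ 0 := by positivity
        have h2 : (((n:ℝ)-1)/n) = 1 - 1/n := by field_simp
        rw [hdetC, Real.div_rpow hBdet.le hAdet.le, h2, Real.rpow_sub hAdet, Real.rpow_one]
        have hApos : (0:ℝ) < A.det ^ ((1:ℝ)/n) := Real.rpow_pos_of_pos hAdet _
        field_simp
    _ ≤ A.det * C.trace := by
        exact mul_le_mul_of_nonneg_left key hAdet.le

variable {E F : Type*} [NormedAddCommGroup E] [NormedSpace ℝ E]
  [NormedAddCommGroup F] [NormedSpace ℝ F]

lemma fderiv_shift (f : E → F) (hf : Differentiable ℝ f) (e x : E) :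
    fderiv ℝ (fun z => f (z + e)) x = fderiv ℝ f (x + e) := by
  have h1 : HasFDerivAt (fun z : E => z + e) (ContinuousLinearMap.id ℝ E) x :=
    (hasFDerivAt_id x).add_const e
  have h2 := (hf (x + e)).hasFDerivAt.comp x h1
  exact h2.fderiv

lemma itd2_shift (f : E → F) (hf : ContDiff ℝ 2 f) (e x : E) (m : Fin 2 → E) :
    iteratedFDeriv ℝ 2 (fun z => f (z + e)) x m = iteratedFDeriv ℝ 2 f (x + e) m := by
  rw [iteratedFDeriv_two_apply, iteratedFDeriv_two_apply]
  have hd : Differentiable ℝ f := hf.differentiable (by norm_num)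
  have hd' : Differentiable ℝ (fderiv ℝ f) :=
    (hf.fderiv_right (m := 1) (by norm_num)).differentiable (by norm_num)
  rw [show fderiv ℝ (fun z => f (z + e)) = (fun z => fderiv ℝ f (z + e)) from
    funext fun z => fderiv_shift f hd e z]
  rw [fderiv_shift (fderiv ℝ f) hd' e x]

end Aux

/-- Lemma 3.1 of the paper: the fractional-order second difference `Δₑˢv` is a
supersolution of the linearized Monge–Ampère operator:
`∑ cof_{ij}(D²v) ∂_{ij}(Δₑˢv) ≥ n (det D²v)^{(n-1)/n} (F(x+e)^{1/n}+F(x-e)^{1/n}-2F(x)^{1/n})/|e|^{2s}`. -/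
theorem increment_supersolution (n : ℕ) (hn : 1 ≤ n)
    (v : EuclideanSpace ℝ (Fin n) → ℝ) (hv : ContDiff ℝ 2 v)
    (H : EuclideanSpace ℝ (Fin n) → Matrix (Fin n) (Fin n) ℝ)
    (hH : ∀ x i j, H x i j =
      iteratedFDeriv ℝ 2 v x
        ![EuclideanSpace.single i (1 : ℝ), EuclideanSpace.single j (1 : ℝ)])
    (hHpos : ∀ x, (H x).PosDef)
    (F : EuclideanSpace ℝ (Fin n) → ℝ) (hF : ∀ x, 0 < F x)
    (hdet : ∀ x, (H x).det = F x)
    (e : EuclideanSpace ℝ (Fin n)) (he : e ≠ 0)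
    (s : ℝ) (hs : 0 < s) (hs1 : s < 1) :
    ∀ x, (∑ i, ∑ j, (H x).adjugate j i *
        iteratedFDeriv ℝ 2
          (fun z => (v (z + e) + v (z - e) - 2 * v z) / ‖e‖ ^ (2 * s)) x
          ![EuclideanSpace.single i (1 : ℝ), EuclideanSpace.single j (1 : ℝ)])
      ≥ (n : ℝ) * (F x) ^ (((n : ℝ) - 1) / n) *
          ((F (x + e)) ^ ((1 : ℝ) / n) + (F (x - e)) ^ ((1 : ℝ) / n)
            - 2 * (F x) ^ ((1 : ℝ) / n)) / ‖e‖ ^ (2 * s) := by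
  intro x
  set c : ℝ := ‖e‖ ^ (2 * s) with hc_def
  have hc : 0 < c := by
    have : (0:ℝ) < ‖e‖ := norm_pos_iff.mpr he
    positivity
  -- contDiff of shifted functions
  have hc1 : ContDiff ℝ 2 (fun z : EuclideanSpace ℝ (Fin n) => v (z + e)) :=
    hv.comp (contDiff_id.add contDiff_const)
  have hc2 : ContDiff ℝ 2 (fun z : EuclideanSpace ℝ (Fin n) => v (z - e)) :=
    hv.comp (contDiff_id.sub contDiff_const)
  have hc3 : ContDiff ℝ 2 (fun z : EuclideanSpace ℝ (Fin n) => v (z + e) + v (z - e)) :=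
    hc1.add hc2
  have hc4 : ContDiff ℝ 2 ((-2 : ℝ) • v) := by
    have := hv.const_smul (-2 : ℝ)
    exact this
  have hc5 : ContDiff ℝ 2
      (fun z : EuclideanSpace ℝ (Fin n) => (v (z + e) + v (z - e)) + ((-2 : ℝ) • v) z) :=
    hc3.add hc4
  -- entrywise second derivative of the second difference
  have hentry : ∀ i j,
      iteratedFDeriv ℝ 2
        (fun z => (v (z + e) + v (z - e) - 2 * v z) / c) x
        ![EuclideanSpace.single i (1 : ℝ), EuclideanSpace.single j (1 : ℝ)]
      = (H (x + e) i j + H (x - e) i j - 2 * H x i j) / c := by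
    intro i j
    set m : Fin 2 → EuclideanSpace ℝ (Fin n) :=
      ![EuclideanSpace.single i (1 : ℝ), EuclideanSpace.single j (1 : ℝ)] with hm
    have heq : (fun z : EuclideanSpace ℝ (Fin n) => (v (z + e) + v (z - e) - 2 * v z) / c)
        = c⁻¹ • (fun z => (v (z + e) + v (z - e)) + ((-2 : ℝ) • v) z) := by
      funext z
      simp only [Pi.smul_apply, smul_eq_mul]
      ring
    rw [heq, iteratedFDeriv_const_smul_apply hc5.contDiffAt]
    rw [ContinuousMultilinearMap.smul_apply]
    rw [iteratedFDeriv_add_apply' hc3.contDiffAt hc4.contDiffAt]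
    rw [ContinuousMultilinearMap.add_apply]
    rw [iteratedFDeriv_add_apply' hc1.contDiffAt hc2.contDiffAt]
    rw [ContinuousMultilinearMap.add_apply]
    rw [iteratedFDeriv_const_smul_apply hv.contDiffAt, ContinuousMultilinearMap.smul_apply]
    have h1 : iteratedFDeriv ℝ 2 (fun z : EuclideanSpace ℝ (Fin n) => v (z + e)) x m
        = iteratedFDeriv ℝ 2 v (x + e) m := itd2_shift v hv e x m
    have h2 : iteratedFDeriv ℝ 2 (fun z : EuclideanSpace ℝ (Fin n) => v (z - e)) x m
        = iteratedFDeriv ℝ 2 v (x - e) m := by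
      have : (fun z : EuclideanSpace ℝ (Fin n) => v (z - e))
          = (fun z => v (z + (-e))) := by
        funext z; rw [sub_eq_add_neg]
      rw [this, itd2_shift v hv (-e) x m, ← sub_eq_add_neg]
    rw [h1, h2, ← hH, ← hH, ← hH]
    simp only [smul_eq_mul]
    field_simp
    ring
  -- rewrite the sum as a trace
  set A := H x
  set B := H (x + e)
  set C := H (x - e)
  have hsum : (∑ i, ∑ j, A.adjugate j i *
      iteratedFDeriv ℝ 2
        (fun z => (v (z + e) + v (z - e) - 2 * v z) / c) x
        ![EuclideanSpace.single i (1 : ℝ), EuclideanSpace.single j (1 : ℝ)])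
      = ((A.adjugate * B).trace + (A.adjugate * C).trace - 2 * ((n : ℝ) * F x)) / c := by
    have step1 : (∑ i, ∑ j, A.adjugate j i *
        iteratedFDeriv ℝ 2
          (fun z => (v (z + e) + v (z - e) - 2 * v z) / c) x
          ![EuclideanSpace.single i (1 : ℝ), EuclideanSpace.single j (1 : ℝ)])
        = (∑ i, ∑ j, A.adjugate j i * (B i j + C i j - 2 * A i j)) / c := by
      rw [Finset.sum_div]
      congr 1; funext i
      rw [Finset.sum_div]
      congr 1; funext j
      rw [hentry i j, mul_div_assoc]
    rw [step1]
    congr 1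
    have hM : (∑ i, ∑ j, A.adjugate j i * (B i j + C i j - 2 * A i j))
        = (A.adjugate * (B + C - (2:ℝ) • A)).trace := by
      rw [Matrix.trace]
      simp only [Matrix.diag_apply, Matrix.mul_apply, Matrix.add_apply, Matrix.sub_apply,
        Matrix.smul_apply, smul_eq_mul]
      rw [Finset.sum_comm]
    rw [hM, Matrix.mul_sub, Matrix.mul_add, Matrix.trace_sub, Matrix.trace_add]
    have : (A.adjugate * ((2:ℝ) • A)).trace = 2 * ((n : ℝ) * F x) := by
      rw [Matrix.mul_smul, Matrix.trace_smul, Matrix.adjugate_mul, Matrix.trace_smul,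
        Matrix.trace_one, hdet]
      simp only [smul_eq_mul, Fintype.card_fin]
      ring
    rw [this]
  rw [hsum]
  -- the two trace inequalities
  have hB := trace_adjugate_mul_ge hn (hHpos x) (hHpos (x + e))
  have hC := trace_adjugate_mul_ge hn (hHpos x) (hHpos (x - e))
  rw [hdet, hdet] at hB
  rw [hdet, hdet] at hC
  rw [ge_iff_le, div_le_div_iff_of_pos_right hc]
  have hcancel : F x ^ (((n:ℝ)-1)/n) * F x ^ ((1:ℝ)/n) = F x := by
    rw [← Real.rpow_add (hF x)]
    have hn0 : (n:ℝ) ≠ 0 := by positivity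
    rw [show ((n:ℝ)-1)/n + 1/n = 1 by field_simp; ring]
    exact Real.rpow_one _
  nlinarith [hB, hC, hcancel]
end
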